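/- Let m > 1, S : Ω → ℝ with S > 0, and suppose u, U : (0,∞) × Ω → ℝ satisfy S(x)/(t+t₀)^{1/(m-1)} ≤ u(t,x) ≤ S(x)/t^{1/(m-1)} for all t ≥ t₀ > 0, where U(t,x) = S(x)/t^{1/(m-1)}. Then for all t ≥ t₀ and x ∈ Ω, |u(t,x)/U(t,x) - 1| ≤ (2/(m-1)) · t₀/(t₀ + t). -/

import Mathlib

/-- If `S(x)/(t+t₀)^{1/(m-1)} ≤ u(t,x) ≤ S(x)/t^{1/(m-1)} = U(t,x)` for `t ≥ t₀ > 0`,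
with `S > 0` and `m > 1`, then `|u(t,x)/U(t,x) - 1| ≤ (2/(m-1)) t₀/(t₀+t)`. -/
theorem stmt_9 {Ω : Type*} (m t₀ : ℝ) (hm : 1 < m) (ht₀ : 0 < t₀)
    (S : Ω → ℝ) (hS : ∀ x, 0 < S x) (u : ℝ → Ω → ℝ)
    (hlow : ∀ t, t₀ ≤ t → ∀ x, S x / (t + t₀) ^ (1 / (m - 1)) ≤ u t x)
    (hup : ∀ t, t₀ ≤ t → ∀ x, u t x ≤ S x / t ^ (1 / (m - 1))) :
    ∀ t, t₀ ≤ t → ∀ x,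
      |u t x / (S x / t ^ (1 / (m - 1))) - 1| ≤ (2 / (m - 1)) * (t₀ / (t₀ + t)) := by
  intro t ht x
  have hm1 : 0 < m - 1 := by linarith
  set β : ℝ := 1 / (m - 1) with hβdef
  have hβ : 0 < β := by positivity
  have htpos : 0 < t := lt_of_lt_of_le ht₀ ht
  have htt : 0 < t + t₀ := by linarith
  have hta : 0 < t ^ β := Real.rpow_pos_of_pos htpos β
  have htb : 0 < (t + t₀) ^ β := Real.rpow_pos_of_pos htt β
  have hSx := hS x
  have hU : 0 < S x / t ^ β := div_pos hSx hta
  -- y := t₀/(t+t₀)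
  set y : ℝ := t₀ / (t + t₀) with hy
  have hy0 : 0 < y := div_pos ht₀ htt
  have hy2 : y ≤ 1 / 2 := by
    rw [hy, div_le_div_iff₀ htt (by norm_num)]
    linarith
  have hy1 : 1 - y = t / (t + t₀) := by
    rw [hy, eq_div_iff htt.ne']
    field_simp
    ring
  have h1my : (0:ℝ) < 1 - y := by linarith
  -- upper bound: u/U ≤ 1
  have h1 : u t x / (S x / t ^ β) ≤ 1 := by
    rw [div_le_one hU]; exact hup t ht x
  -- lower bound: (1-y)^β ≤ u/U
  have h2 : (1 - y) ^ β ≤ u t x / (S x / t ^ β) := by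
    rw [hy1, Real.div_rpow htpos.le htt.le, le_div_iff₀ hU]
    have key : t ^ β / (t + t₀) ^ β * (S x / t ^ β) = S x / (t + t₀) ^ β := by
      field_simp
    rw [key]
    exact hlow t ht x
  -- key numeric inequality: 1 - 2*β*y ≤ (1-y)^β
  have hlog : -(2 * y) ≤ Real.log (1 - y) := by
    have hinv : Real.log (1 - y)⁻¹ ≤ (1 - y)⁻¹ - 1 :=
      Real.log_le_sub_one_of_pos (by positivity)
    have h2' : (1 - y)⁻¹ - 1 ≤ 2 * y := by
      rw [inv_eq_one_div, div_sub' (ne_of_gt h1my), div_le_iff₀ h1my]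
      nlinarith
    rw [Real.log_inv] at hinv
    linarith
  have hbern : 1 - 2 * β * y ≤ (1 - y) ^ β := by
    rw [Real.rpow_def_of_pos h1my]
    have h3 : β * -(2 * y) ≤ Real.log (1 - y) * β := by
      nlinarith [mul_le_mul_of_nonneg_left hlog hβ.le]
    have h4 : (β * -(2 * y)) + 1 ≤ Real.exp (β * -(2 * y)) := Real.add_one_le_exp _
    have h5 : Real.exp (β * -(2 * y)) ≤ Real.exp (Real.log (1 - y) * β) :=
      Real.exp_le_exp.mpr h3
    nlinarith
  have habs : |u t x / (S x / t ^ β) - 1| = 1 - u t x / (S x / t ^ β) := by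
    rw [abs_of_nonpos (by linarith)]; ring
  rw [habs]
  have hfin : (2 / (m - 1)) * (t₀ / (t₀ + t)) = 2 * β * y := by
    rw [hy, hβdef]
    rw [show t₀ + t = t + t₀ by ring]
    ring
  rw [hfin]
  linarith
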